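/- Let K be a class of algebras of some fixed signature, let B ∈ HSP(K), and let μ, α be congruences on B. If α laxly centralizes μ with respect to the variety HSP(K), then there exist an algebra C ∈ HSP(K), a surjective homomorphism π : C → B, and congruences β, γ on C with →π β ≥ μ, →π γ ≥ α, and β ∧ γ = ⊥, such that moreover the quotients C/β and C/γ belong to SP(K). -/
import Mathlib


/-!
Basic universal algebra: signatures, algebras, homomorphisms, congruences
(forming a complete lattice), generated congruences, images and preimages of
congruences, quotient algebras, subalgebras, products, ultraproducts,
varieties (classes closed under H, S, P), the term-condition commutator,
relatively free algebras, and lax centrality.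
-/

universe u v

namespace UAlg

/-- A (finitary) signature: a type of operation symbols with arities. -/
structure Signature : Type (u + 1) where
  ops : Type u
  arity : ops → ℕ

/-- An algebra of signature `S`. -/
structure Algebra (S : Signature.{u}) : Type (u + 1) where
  carrier : Type u
  interp : ∀ o : S.ops, (Fin (S.arity o) → carrier) → carrier

variable {S : Signature.{u}}

/-- A homomorphism of algebras. -/
structure Hom (A B : Algebra S) : Type u where
  toFun : A.carrier → B.carrier
  map_interp : ∀ (o : S.ops) (a : Fin (S.arity o) → A.carrier),
    toFun (A.interp o a) = B.interp o (fun i => toFun (a i))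

/-- Composition of homomorphisms. -/
def Hom.comp {A B C : Algebra S} (g : Hom B C) (f : Hom A B) : Hom A C where
  toFun := g.toFun ∘ f.toFun
  map_interp o a := by
    simp only [Function.comp, f.map_interp, g.map_interp]

/-- A congruence on an algebra: an equivalence relation compatible with the
operations. -/
structure Cong (A : Algebra S) : Type u where
  r : A.carrier → A.carrier → Prop
  iseqv : Equivalence r
  compat : ∀ (o : S.ops) (a b : Fin (S.arity o) → A.carrier),
    (∀ i, r (a i) (b i)) → r (A.interp o a) (A.interp o b)

namespace Cong

variable {A : Algebra S}

theorem ext {c d : Cong A} (h : ∀ x y, c.r x y ↔ d.r x y) : c = d := by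
  cases c; cases d
  simp only [mk.injEq]
  funext x y
  exact propext (h x y)

instance : PartialOrder (Cong A) where
  le c d := ∀ x y, c.r x y → d.r x y
  le_refl c := fun _ _ h => h
  le_trans a b c hab hbc := fun x y h => hbc x y (hab x y h)
  le_antisymm a b h1 h2 := ext fun x y => ⟨h1 x y, h2 x y⟩

instance : InfSet (Cong A) where
  sInf s :=
    { r := fun x y => ∀ c ∈ s, c.r x y
      iseqv :=
        ⟨fun x c _ => c.iseqv.refl x,
         fun h c hc => c.iseqv.symm (h c hc),
         fun h1 h2 c hc => c.iseqv.trans (h1 c hc) (h2 c hc)⟩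
      compat := fun o a b h c hc => c.compat o a b fun i => h i c hc }

instance : CompleteLattice (Cong A) :=
  completeLatticeOfInf _ (fun s =>
    ⟨fun c hc x y h => h c hc, fun _ hd x y h c hc => hd hc x y h⟩)

end Cong

/-- The congruence generated by a binary relation. -/
def conGen (A : Algebra S) (s : A.carrier → A.carrier → Prop) : Cong A :=
  sInf {c : Cong A | ∀ x y, s x y → c.r x y}

/-- The kernel congruence of a homomorphism. -/
def Hom.ker {A B : Algebra S} (f : Hom A B) : Cong A where
  r x y := f.toFun x = f.toFun y
  iseqv := ⟨fun _ => rfl, Eq.symm, Eq.trans⟩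
  compat o a b h := by
    show f.toFun (A.interp o a) = f.toFun (A.interp o b)
    rw [f.map_interp, f.map_interp]
    exact congrArg _ (funext h)

/-- `conMap f α` (written `→f α` in the paper) is the congruence of `B`
generated by the image `f(α)` of the congruence `α` of `A`. -/
def conMap {A B : Algebra S} (f : Hom A B) (α : Cong A) : Cong B :=
  conGen B (fun x y => ∃ a a', α.r a a' ∧ f.toFun a = x ∧ f.toFun a' = y)

/-- The inverse image `f⁻¹(β)` of a congruence. -/
def conComap {A B : Algebra S} (f : Hom A B) (β : Cong B) : Cong A where
  r x y := β.r (f.toFun x) (f.toFun y)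
  iseqv :=
    ⟨fun _ => β.iseqv.refl _, fun h => β.iseqv.symm h,
     fun h1 h2 => β.iseqv.trans h1 h2⟩
  compat o a b h := by
    show β.r (f.toFun (A.interp o a)) (f.toFun (A.interp o b))
    rw [f.map_interp, f.map_interp]
    exact β.compat o _ _ h

/-- The setoid underlying a congruence. -/
def Cong.toSetoid {A : Algebra S} (c : Cong A) : Setoid A.carrier :=
  ⟨c.r, c.iseqv⟩

/-- The quotient algebra of an algebra by a congruence. -/
noncomputable def quotAlg (A : Algebra S) (c : Cong A) : Algebra S where
  carrier := Quotient c.toSetoid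
  interp o a := Quotient.mk c.toSetoid (A.interp o (fun i => (a i).out))

/-- The natural (quotient) homomorphism `A → A/c`. -/
def natHom (A : Algebra S) (c : Cong A) : Hom A (quotAlg A c) where
  toFun := Quotient.mk c.toSetoid
  map_interp o a := by
    apply Quotient.sound
    apply c.compat
    intro i
    show c.r (a i) (Quotient.mk c.toSetoid (a i)).out
    exact Quotient.exact ((Quotient.out_eq (Quotient.mk c.toSetoid (a i))).symm)

/-- A subuniverse: a subset closed under the operations. -/
structure Subuniverse (A : Algebra S) : Type u where
  carrier : Set A.carrier
  closed : ∀ (o : S.ops) (a : Fin (S.arity o) → A.carrier),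
    (∀ i, a i ∈ carrier) → A.interp o a ∈ carrier

/-- The subalgebra determined by a subuniverse. -/
def Subuniverse.alg {A : Algebra S} (s : Subuniverse A) : Algebra S where
  carrier := {x // x ∈ s.carrier}
  interp o a := ⟨A.interp o (fun i => (a i).1), s.closed o _ (fun i => (a i).2)⟩

/-- The product of a family of algebras. -/
def prodAlg {ι : Type u} (A : ι → Algebra S) : Algebra S where
  carrier := ∀ i, (A i).carrier
  interp o a i := (A i).interp o (fun j => a j i)

/-- A variety: a class of algebras closed under homomorphic images,
subalgebras, and products. -/
structure IsVariety (V : Algebra S → Prop) : Prop where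
  closed_hom : ∀ (A B : Algebra S) (f : Hom A B),
    Function.Surjective f.toFun → V A → V B
  closed_sub : ∀ (A : Algebra S) (s : Subuniverse A), V A → V s.alg
  closed_prod : ∀ (ι : Type u) (A : ι → Algebra S), (∀ i, V (A i)) → V (prodAlg A)

/-- `α` laxly centralizes `μ` with respect to the class `V`. -/
def LaxCentralizes (V : Algebra S → Prop) (B : Algebra S) (μ α : Cong B) : Prop :=
  ∃ C : Algebra S, V C ∧ ∃ (π : Hom C B) (β γ : Cong C),
    Function.Surjective π.toFun ∧ μ ≤ conMap π β ∧ α ≤ conMap π γ ∧ β ⊓ γ = ⊥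

/-- `B` is a homomorphic image of a member of `K`. -/
def InH (K : Algebra S → Prop) (B : Algebra S) : Prop :=
  ∃ A, K A ∧ ∃ f : Hom A B, Function.Surjective f.toFun

/-- `B` embeds into a product of members of `K`, i.e. `B ∈ SP(K)`. -/
def InSP (K : Algebra S → Prop) (B : Algebra S) : Prop :=
  ∃ (ι : Type u) (A : ι → Algebra S), (∀ i, K (A i)) ∧
    ∃ f : Hom B (prodAlg A), Function.Injective f.toFun

/-- `B ∈ HSP(K)`: `B` is a homomorphic image of an algebra embeddable in a
product of members of `K`. -/
def InHSP (K : Algebra S → Prop) (B : Algebra S) : Prop :=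
  ∃ C : Algebra S, InSP K C ∧ ∃ f : Hom C B, Function.Surjective f.toFun

/-- The congruence on a product given by an ultrafilter on the index set. -/
def ultraCong {ι : Type u} (A : ι → Algebra S) (U : Ultrafilter ι) :
    Cong (prodAlg A) where
  r x y := {i | x i = y i} ∈ U
  iseqv := by
    refine ⟨fun x => ?_, fun {x y} h => ?_, fun {x y z} h1 h2 => ?_⟩
    · have : {i | x i = x i} = Set.univ := by ext i; simp
      rw [this]; exact Filter.univ_mem
    · have : {i | y i = x i} = {i | x i = y i} := by ext i; exact eq_comm
      rw [this]; exact h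
    · refine Filter.mem_of_superset (Filter.inter_mem h1 h2) ?_
      intro i hi
      exact hi.1.trans hi.2
  compat o a b h := by
    have h1 : (⋂ j, {i | a j i = b j i}) ∈ (U : Filter ι) :=
      (Filter.iInter_mem).2 h
    refine Filter.mem_of_superset h1 ?_
    intro i hi
    simp only [Set.mem_iInter, Set.mem_setOf_eq] at hi
    show (A i).interp o (fun j => a j i) = (A i).interp o (fun j => b j i)
    exact congrArg _ (funext hi)

/-- `B ∈ HSP_u(K)`: `B` is a homomorphic image of an algebra embeddable in an
ultraproduct of members of `K`. -/
def InHSPu (K : Algebra S → Prop) (B : Algebra S) : Prop :=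
  ∃ (ι : Type u) (A : ι → Algebra S) (U : Ultrafilter ι), (∀ i, K (A i)) ∧
    ∃ C : Algebra S,
      (∃ g : Hom C (quotAlg (prodAlg A) (ultraCong A U)),
        Function.Injective g.toFun) ∧
      ∃ f : Hom C B, Function.Surjective f.toFun

/-- `μ` is the monolith of `B`: the minimum nontrivial congruence.
In particular its existence means `B` is subdirectly irreducible. -/
def IsMonolith (B : Algebra S) (μ : Cong B) : Prop :=
  μ ≠ ⊥ ∧ ∀ θ : Cong B, θ ≠ ⊥ → μ ≤ θ

/-- Terms of signature `S` over a set `X` of variables. -/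
inductive Tm (S : Signature.{u}) (X : Type v) : Type max u v where
  | var : X → Tm S X
  | app : (o : S.ops) → (Fin (S.arity o) → Tm S X) → Tm S X

/-- Evaluation of a term in an algebra under an assignment of the variables. -/
def Tm.eval {X : Type v} (A : Algebra S) (v : X → A.carrier) :
    Tm S X → A.carrier
  | .var x => v x
  | .app o t => A.interp o (fun i => Tm.eval A v (t i))

/-- The (term-condition) centralizing relation `C(α, β; δ)`. -/
def Centralizes {A : Algebra S} (α β δ : Cong A) : Prop :=
  ∀ (n : ℕ) (t : Tm S (Unit ⊕ Fin n)) (a b : A.carrier)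
    (c d : Fin n → A.carrier),
    α.r a b → (∀ i, β.r (c i) (d i)) →
    δ.r (t.eval A (Sum.elim (fun _ => a) c)) (t.eval A (Sum.elim (fun _ => a) d)) →
    δ.r (t.eval A (Sum.elim (fun _ => b) c)) (t.eval A (Sum.elim (fun _ => b) d))

/-- The commutator `[α, β]`: the least congruence `δ` such that `α`
centralizes `β` modulo `δ` (the Freese–McKenzie commutator, which is the
modular commutator in congruence-modular varieties). -/
def commutator {A : Algebra S} (α β : Cong A) : Cong A :=
  sInf {δ : Cong A | Centralizes α β δ}

/-- The term algebra over a set of variables. -/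
def termAlg (S : Signature.{u}) (X : Type u) : Algebra S :=
  ⟨Tm S X, Tm.app⟩

/-- The congruence of `V`-equations on the term algebra: two terms are related
iff they evaluate the same way in every member of `V`. -/
def eqThy (V : Algebra S → Prop) (X : Type u) : Cong (termAlg S X) where
  r s t := ∀ A : Algebra S, V A → ∀ v : X → A.carrier, s.eval A v = t.eval A v
  iseqv :=
    ⟨fun _ _ _ _ => rfl, fun h A hA v => (h A hA v).symm,
     fun h1 h2 A hA v => (h1 A hA v).trans (h2 A hA v)⟩
  compat o a b h A hA v := by
    show Tm.eval A v (Tm.app o a) = Tm.eval A v (Tm.app o b)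
    simp only [Tm.eval]
    exact congrArg _ (funext fun i => h i A hA v)

/-- The relatively free algebra of `V` on the set `X` of generators. -/
noncomputable def freeAlg (V : Algebra S → Prop) (X : Type u) : Algebra S :=
  quotAlg (termAlg S X) (eqThy V X)

/-- The canonical generators of the relatively free algebra. -/
def freeGen (V : Algebra S → Prop) (X : Type u) (x : X) :
    (freeAlg V X).carrier :=
  Quotient.mk (eqThy V X).toSetoid (Tm.var x)

/-- The homomorphism from the relatively free algebra of `V` to an algebra
`B ∈ V` induced by an assignment of the generators. -/
def evalFreeHom (V : Algebra S → Prop) (X : Type u) (B : Algebra S)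
    (hB : V B) (v : X → B.carrier) : Hom (freeAlg V X) B where
  toFun := Quotient.lift (fun t : Tm S X => t.eval B v) (fun s t h => h B hB v)
  map_interp o a := by
    show Tm.eval B v (Tm.app o (fun i => (a i).out)) = _
    simp only [Tm.eval]
    congr 1
    funext i
    conv_rhs => rw [← Quotient.out_eq (a i)]
    rfl


/-- The equality (trivial) congruence. -/
def eqCong (A : Algebra S) : Cong A where
  r := Eq
  iseqv := ⟨fun _ => rfl, Eq.symm, Eq.trans⟩
  compat o a b h := congrArg _ (funext h)

lemma bot_r_iff {A : Algebra S} {x y : A.carrier} :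
    (⊥ : Cong A).r x y ↔ x = y := by
  constructor
  · intro h
    exact (bot_le : (⊥ : Cong A) ≤ eqCong A) x y h
  · rintro rfl
    exact (⊥ : Cong A).iseqv.refl x

lemma inf_r {A : Algebra S} (β γ : Cong A) {x y : A.carrier}
    (h1 : β.r x y) (h2 : γ.r x y) : (β ⊓ γ).r x y := by
  let θ : Cong A :=
    { r := fun a b => β.r a b ∧ γ.r a b
      iseqv := ⟨fun a => ⟨β.iseqv.refl a, γ.iseqv.refl a⟩,
        fun h => ⟨β.iseqv.symm h.1, γ.iseqv.symm h.2⟩,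
        fun h h' => ⟨β.iseqv.trans h.1 h'.1, γ.iseqv.trans h.2 h'.2⟩⟩
      compat := fun o a b h =>
        ⟨β.compat o a b fun i => (h i).1, γ.compat o a b fun i => (h i).2⟩ }
  have hθ : θ ≤ β ⊓ γ := le_inf (fun a b h => h.1) (fun a b h => h.2)
  exact hθ x y ⟨h1, h2⟩

lemma conMap_r_of {A B : Algebra S} (f : Hom A B) (θ : Cong A)
    {a a' : A.carrier} (h : θ.r a a') :
    (conMap f θ).r (f.toFun a) (f.toFun a') :=
  fun c hc => hc _ _ ⟨a, a', h, rfl, rfl⟩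

lemma conMap_le {A A' B : Algebra S} (f : Hom A B) (f' : Hom A' B)
    (θ : Cong A) (θ' : Cong A')
    (H : ∀ a a', θ.r a a' → ∃ X X', θ'.r X X' ∧
      f'.toFun X = f.toFun a ∧ f'.toFun X' = f.toFun a') :
    conMap f θ ≤ conMap f' θ' := by
  apply sInf_le
  rintro x y ⟨a, a', hr, rfl, rfl⟩
  obtain ⟨X, X', hX, e1, e2⟩ := H a a' hr
  rw [← e1, ← e2]
  exact conMap_r_of f' θ' hX

/-- If `B ∈ HSP(K)` and `α` laxly centralizes `μ` with respect
to the variety `HSP(K)`, then a witnessing tuple `(C, π, β, γ)` can be chosen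
so that in addition `C/β` and `C/γ` belong to `SP(K)`. -/
theorem laxCentralizes_witness_in_SP (K : Algebra S → Prop) {B : Algebra S}
    (hB : InHSP K B) (μ α : Cong B)
    (h : LaxCentralizes (InHSP K) B μ α) :
    ∃ C : Algebra S, InHSP K C ∧ ∃ (π : Hom C B) (β γ : Cong C),
      Function.Surjective π.toFun ∧ μ ≤ conMap π β ∧ α ≤ conMap π γ ∧
      β ⊓ γ = ⊥ ∧ InSP K (quotAlg C β) ∧ InSP K (quotAlg C γ) := by
  classical
  clear hB
  obtain ⟨C, hC, π, β, γ, hπ, hμ, hα, hβγ⟩ := h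
  obtain ⟨D, ⟨ι, A, hA, f, hf⟩, g, hg⟩ := hC
  -- uniqueness of "diagonal" witnesses, from β ⊓ γ = ⊥
  have uniq : ∀ (c c' : C.carrier) (x y : D.carrier),
      β.r c (g.toFun x) → γ.r c (g.toFun y) →
      β.r c' (g.toFun x) → γ.r c' (g.toFun y) → c = c' := by
    intro c c' x y h1 h2 h3 h4
    have hb : β.r c c' := β.iseqv.trans h1 (β.iseqv.symm h3)
    have hc2 : γ.r c c' := γ.iseqv.trans h2 (γ.iseqv.symm h4)
    have hinf := inf_r β γ hb hc2
    rw [hβγ] at hinf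
    exact bot_r_iff.mp hinf
  -- the pullback algebra C'
  let C' : Algebra S :=
    { carrier := {p : D.carrier × D.carrier //
        ∃ c, β.r c (g.toFun p.1) ∧ γ.r c (g.toFun p.2)}
      interp := fun o a =>
        ⟨(D.interp o fun i => (a i).1.1, D.interp o fun i => (a i).1.2),
         ⟨C.interp o fun i => ((a i).2).choose, by
            constructor
            · rw [g.map_interp]
              exact β.compat o _ _ fun i => ((a i).2.choose_spec).1
            · rw [g.map_interp]
              exact γ.compat o _ _ fun i => ((a i).2.choose_spec).2⟩⟩ }
  -- the two projections and the mediating map to C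
  let pr1 : Hom C' D := ⟨fun X => X.1.1, fun o a => rfl⟩
  let pr2 : Hom C' D := ⟨fun X => X.1.2, fun o a => rfl⟩
  let hh : Hom C' C :=
    { toFun := fun X => X.2.choose
      map_interp := by
        intro o a
        have h3 : β.r (C.interp o fun i => ((a i).2).choose)
            (g.toFun (D.interp o fun i => (a i).1.1)) := by
          rw [g.map_interp]
          exact β.compat o _ _ fun i => ((a i).2.choose_spec).1
        have h4 : γ.r (C.interp o fun i => ((a i).2).choose)
            (g.toFun (D.interp o fun i => (a i).1.2)) := by
          rw [g.map_interp]
          exact γ.compat o _ _ fun i => ((a i).2.choose_spec).2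
        exact uniq _ _ _ _ ((C'.interp o a).2.choose_spec).1
          ((C'.interp o a).2.choose_spec).2 h3 h4 }
  let π' : Hom C' B := π.comp hh
  let β' : Cong C' := pr1.ker
  let γ' : Cong C' := pr2.ker
  -- C' embeds into a product of members of K
  have hC'SP : InSP K C' := by
    refine ⟨ι ⊕ ι, Sum.elim A A, fun j => by cases j <;> exact hA _, ?_⟩
    refine ⟨⟨fun X j => match j with
      | .inl i => f.toFun X.1.1 i
      | .inr i => f.toFun X.1.2 i, ?_⟩, ?_⟩
    · intro o a
      funext j
      cases j with
      | inl i =>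
        show f.toFun (D.interp o fun k => (a k).1.1) i = _
        rw [f.map_interp]
        rfl
      | inr i =>
        show f.toFun (D.interp o fun k => (a k).1.2) i = _
        rw [f.map_interp]
        rfl
    · intro X X' hE
      apply Subtype.ext
      have h1 : X.1.1 = X'.1.1 := hf (funext fun i => congrFun hE (Sum.inl i))
      have h2 : X.1.2 = X'.1.2 := hf (funext fun i => congrFun hE (Sum.inr i))
      exact Prod.ext h1 h2
  -- surjectivity of π'
  have hπ' : Function.Surjective π'.toFun := by
    intro b
    obtain ⟨c, rfl⟩ := hπ b
    obtain ⟨x, hx⟩ := hg c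
    have hw : β.r c (g.toFun x) ∧ γ.r c (g.toFun x) := by
      rw [hx]; exact ⟨β.iseqv.refl c, γ.iseqv.refl c⟩
    refine ⟨⟨(x, x), ⟨c, hw⟩⟩, ?_⟩
    show π.toFun _ = π.toFun c
    congr 1
    exact uniq _ _ x x (Exists.choose_spec (p := fun c => β.r c (g.toFun x) ∧ γ.r c (g.toFun x)) ⟨c, hw⟩).1
      (Exists.choose_spec (p := fun c => β.r c (g.toFun x) ∧ γ.r c (g.toFun x)) ⟨c, hw⟩).2 hw.1 hw.2
  -- μ ≤ conMap π' β'
  have hμ' : μ ≤ conMap π' β' := by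
    refine le_trans hμ (conMap_le π π' β β' ?_)
    intro a a' hr
    obtain ⟨x, hx⟩ := hg a
    obtain ⟨y, hy⟩ := hg a
    obtain ⟨y', hy'⟩ := hg a'
    have hw : β.r a (g.toFun x) ∧ γ.r a (g.toFun y) := by
      rw [hx, hy]; exact ⟨β.iseqv.refl a, γ.iseqv.refl a⟩
    have hw' : β.r a' (g.toFun x) ∧ γ.r a' (g.toFun y') := by
      rw [hx, hy']; exact ⟨β.iseqv.symm hr, γ.iseqv.refl a'⟩
    refine ⟨⟨(x, y), ⟨a, hw⟩⟩, ⟨(x, y'), ⟨a', hw'⟩⟩, rfl, ?_, ?_⟩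
    · show π.toFun _ = π.toFun a
      congr 1
      exact uniq _ _ x y
        (Exists.choose_spec (p := fun c => β.r c (g.toFun x) ∧ γ.r c (g.toFun y)) ⟨a, hw⟩).1
        (Exists.choose_spec (p := fun c => β.r c (g.toFun x) ∧ γ.r c (g.toFun y)) ⟨a, hw⟩).2
        hw.1 hw.2
    · show π.toFun _ = π.toFun a'
      congr 1
      exact uniq _ _ x y'
        (Exists.choose_spec (p := fun c => β.r c (g.toFun x) ∧ γ.r c (g.toFun y')) ⟨a', hw'⟩).1
        (Exists.choose_spec (p := fun c => β.r c (g.toFun x) ∧ γ.r c (g.toFun y')) ⟨a', hw'⟩).2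
        hw'.1 hw'.2
  -- α ≤ conMap π' γ'
  have hα' : α ≤ conMap π' γ' := by
    refine le_trans hα (conMap_le π π' γ γ' ?_)
    intro a a' hr
    obtain ⟨y, hy⟩ := hg a
    obtain ⟨x, hx⟩ := hg a
    obtain ⟨x', hx'⟩ := hg a'
    have hw : β.r a (g.toFun x) ∧ γ.r a (g.toFun y) := by
      rw [hx, hy]; exact ⟨β.iseqv.refl a, γ.iseqv.refl a⟩
    have hw' : β.r a' (g.toFun x') ∧ γ.r a' (g.toFun y) := by
      rw [hx', hy]; exact ⟨β.iseqv.refl a', γ.iseqv.symm hr⟩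
    refine ⟨⟨(x, y), ⟨a, hw⟩⟩, ⟨(x', y), ⟨a', hw'⟩⟩, rfl, ?_, ?_⟩
    · show π.toFun _ = π.toFun a
      congr 1
      exact uniq _ _ x y
        (Exists.choose_spec (p := fun c => β.r c (g.toFun x) ∧ γ.r c (g.toFun y)) ⟨a, hw⟩).1
        (Exists.choose_spec (p := fun c => β.r c (g.toFun x) ∧ γ.r c (g.toFun y)) ⟨a, hw⟩).2
        hw.1 hw.2
    · show π.toFun _ = π.toFun a'
      congr 1
      exact uniq _ _ x' y
        (Exists.choose_spec (p := fun c => β.r c (g.toFun x') ∧ γ.r c (g.toFun y)) ⟨a', hw'⟩).1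
        (Exists.choose_spec (p := fun c => β.r c (g.toFun x') ∧ γ.r c (g.toFun y)) ⟨a', hw'⟩).2
        hw'.1 hw'.2
  -- β' ⊓ γ' = ⊥
  have hbg' : β' ⊓ γ' = ⊥ := by
    apply le_antisymm _ bot_le
    intro X X' hXX'
    have h1 : X.1.1 = X'.1.1 := (inf_le_left : β' ⊓ γ' ≤ β') X X' hXX'
    have h2 : X.1.2 = X'.1.2 := (inf_le_right : β' ⊓ γ' ≤ γ') X X' hXX'
    have hE : X = X' := Subtype.ext (Prod.ext h1 h2)
    rw [hE]
    exact (⊥ : Cong C').iseqv.refl X'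
  -- the quotients lie in SP(K)
  have hq1 : InSP K (quotAlg C' β') := by
    refine ⟨ι, A, hA, ⟨⟨Quotient.lift (fun X : C'.carrier => f.toFun X.1.1)
      (fun X X' hXX' => congrArg f.toFun hXX'), ?_⟩, ?_⟩⟩
    · intro o a
      show f.toFun (D.interp o fun i => (Quotient.out (a i)).1.1) = _
      rw [f.map_interp]
      congr 1
      funext i
      conv_rhs => rw [← Quotient.out_eq (a i)]
      rfl
    · intro x y
      induction x using Quotient.ind with | _ p =>
      induction y using Quotient.ind with | _ q =>
      intro hxy
      exact Quotient.sound (hf hxy)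
  have hq2 : InSP K (quotAlg C' γ') := by
    refine ⟨ι, A, hA, ⟨⟨Quotient.lift (fun X : C'.carrier => f.toFun X.1.2)
      (fun X X' hXX' => congrArg f.toFun hXX'), ?_⟩, ?_⟩⟩
    · intro o a
      show f.toFun (D.interp o fun i => (Quotient.out (a i)).1.2) = _
      rw [f.map_interp]
      congr 1
      funext i
      conv_rhs => rw [← Quotient.out_eq (a i)]
      rfl
    · intro x y
      induction x using Quotient.ind with | _ p =>
      induction y using Quotient.ind with | _ q =>
      intro hxy
      exact Quotient.sound (hf hxy)
  exact ⟨C', ⟨C', hC'SP, ⟨id, fun o a => rfl⟩, fun x => ⟨x, rfl⟩⟩,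
    π', β', γ', hπ', hμ', hα', hbg', hq1, hq2⟩

end UAlg
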